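/- Let p¹, p², …, pⁿ ∈ ℝ² (n ≥ 2) be distinct points and, for j ∈ {2,…,n}, set r_j = (d_{p¹pʲ} + x_{pʲ} − x_{p¹})/2. If k ∈ {2,…,n} satisfies r_k ≤ r_j for all j ∈ {2,…,n} (i.e., pᵏ belongs to the argmin set N_D(p¹)), then pᵏ is a Voronoi neighbor of p¹, i.e., V(p¹) ∩ V(pᵏ) contains at least two distinct points. -/

import Mathlib

noncomputable abbrev Pt := EuclideanSpace ℝ (Fin 2)

/-- The energy-based Voronoi cell of the generator `p i` among the generators `p`. -/
def Vcell {n : ℕ} (p : Fin n → Pt) (i : Fin n) : Set Pt :=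
  {q : Pt | ∀ j : Fin n, j ≠ i → dist (p i) q + p i 0 ≤ dist (p j) q + p j 0}

lemma coord_sub_le_dist (x y : Pt) : x 0 - y 0 ≤ dist x y := by
  have h : dist x y = Real.sqrt (dist (x 0) (y 0) ^ 2 + dist (x 1) (y 1) ^ 2) := by
    rw [EuclideanSpace.dist_eq, Fin.sum_univ_two]
  have h3 : Real.sqrt (dist (x 0) (y 0) ^ 2) ≤
      Real.sqrt (dist (x 0) (y 0) ^ 2 + dist (x 1) (y 1) ^ 2) :=
    Real.sqrt_le_sqrt (by nlinarith [sq_nonneg (dist (x 1) (y 1))])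
  rw [Real.sqrt_sq dist_nonneg] at h3
  have h4 := le_abs_self (x 0 - y 0)
  rw [← Real.dist_eq] at h4
  linarith

lemma dist_line (a u : Pt) (hu : ‖u‖ = 1) (s t : ℝ) :
    dist (a + s • u) (a + t • u) = |s - t| := by
  rw [dist_eq_norm]
  have : (a + s • u) - (a + t • u) = (s - t) • u := by module
  rw [this, norm_smul, hu, Real.norm_eq_abs, mul_one]

lemma dist_line0 (a u : Pt) (hu : ‖u‖ = 1) (t : ℝ) :
    dist a (a + t • u) = |t| := by
  have := dist_line a u hu 0 t
  simpa using this

lemma horiz_case (n : ℕ) (p : Fin (n + 2) → Pt) (k : Fin (n + 2)) (hk : k ≠ 0)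
    (hy : p k 1 = p 0 1) :
    ∃ q1 q2 : Pt, q1 ≠ q2 ∧
      q1 ∈ Vcell p 0 ∩ Vcell p k ∧ q2 ∈ Vcell p 0 ∩ Vcell p k := by
  set a := p 0 with ha
  set b := p k with hb
  set e : Pt := EuclideanSpace.single 0 1 with he
  have he0 : e 0 = 1 := by simp [he]
  have he1 : e 1 = 0 := by simp [he]
  have hne : ‖e‖ = 1 := by rw [he, EuclideanSpace.norm_single]; norm_num
  -- coordinates of a + t • e
  have hco0 : ∀ t : ℝ, (a + t • e) 0 = a 0 + t := by
    intro t
    simp [PiLp.add_apply, PiLp.smul_apply, he0, smul_eq_mul]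
  have hco1 : ∀ t : ℝ, (a + t • e) 1 = a 1 := by
    intro t
    simp [PiLp.add_apply, PiLp.smul_apply, he1, smul_eq_mul]
  -- distance from a
  have hda : ∀ t : ℝ, 0 ≤ t → dist a (a + t • e) = t := by
    intro t ht
    rw [dist_eq_norm]
    have : a - (a + t • e) = (-t) • e := by module
    rw [this, norm_smul, hne, Real.norm_eq_abs, mul_one, abs_neg, abs_of_nonneg ht]
  -- distance from b
  have hdb : ∀ t : ℝ, b 0 - a 0 ≤ t → dist b (a + t • e) = a 0 + t - b 0 := by
    intro t ht
    rw [EuclideanSpace.dist_eq, Fin.sum_univ_two, hco0, hco1, ← hy]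
    have h1 : dist (b 1) (b 1) = 0 := by simp
    rw [h1]
    rw [Real.dist_eq]
    have h2 : |b 0 - (a 0 + t)| = a 0 + t - b 0 := by
      rw [abs_sub_comm]; exact abs_of_nonneg (by linarith)
    rw [h2]
    rw [show (a 0 + t - b 0) ^ 2 + 0 ^ 2 = (a 0 + t - b 0) ^ 2 by ring]
    exact Real.sqrt_sq (by linarith)
  -- membership
  have hmem : ∀ t : ℝ, 0 ≤ t → b 0 - a 0 ≤ t →
      (a + t • e) ∈ Vcell p 0 ∩ Vcell p k := by
    intro t ht0 htb
    have hfa : dist a (a + t • e) + a 0 = a 0 + t := by rw [hda t ht0]; ring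
    have hfb : dist b (a + t • e) + b 0 = a 0 + t := by rw [hdb t htb]; ring
    have hfj : ∀ j : Fin (n + 2), a 0 + t ≤ dist (p j) (a + t • e) + p j 0 := by
      intro j
      have := coord_sub_le_dist (a + t • e) (p j)
      rw [hco0, dist_comm] at this
      linarith
    constructor
    · intro j hj
      rw [← ha, hfa]
      exact hfj j
    · intro j hj
      rw [← hb, hfb]
      exact hfj j
  set t1 := max 0 (b 0 - a 0) with ht1
  refine ⟨a + t1 • e, a + (t1 + 1) • e, ?_, hmem t1 (le_max_left _ _) (le_max_right _ _),
    hmem (t1 + 1) (by positivity) (by have := le_max_right 0 (b 0 - a 0); linarith)⟩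
  intro hEq
  have : (a + t1 • e) 0 = (a + (t1 + 1) • e) 0 := by rw [hEq]
  rw [hco0, hco0] at this
  linarith

set_option maxHeartbeats 1000000 in
lemma nonhoriz_case (n : ℕ) (p : Fin (n + 2) → Pt) (hp : Function.Injective p)
    (k : Fin (n + 2)) (hk : k ≠ 0)
    (hmin : ∀ j : Fin (n + 2), j ≠ 0 →
      (dist (p 0) (p k) + p k 0 - p 0 0) / 2 ≤ (dist (p 0) (p j) + p j 0 - p 0 0) / 2)
    (hy : p k 1 ≠ p 0 1) :
    ∃ q1 q2 : Pt, q1 ≠ q2 ∧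
      q1 ∈ Vcell p 0 ∩ Vcell p k ∧ q2 ∈ Vcell p 0 ∩ Vcell p k := by
  set a := p 0 with ha
  set b := p k with hb
  have hab : a ≠ b := fun h => hk (hp h.symm)
  set d : ℝ := dist a b with hd
  have hdpos : 0 < d := dist_pos.mpr hab
  -- |b 0 - a 0| < d
  have hd2 : d ^ 2 = (a 0 - b 0) ^ 2 + (a 1 - b 1) ^ 2 := by
    rw [hd, EuclideanSpace.dist_eq, Fin.sum_univ_two,
      Real.sq_sqrt (by positivity), Real.dist_eq, Real.dist_eq, sq_abs, sq_abs]
  have hy1 : a 1 - b 1 ≠ 0 := fun h => hy (by linarith [sub_eq_zero.mp h])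
  have habs : |b 0 - a 0| < d := by
    nlinarith [sq_abs (b 0 - a 0), abs_nonneg (b 0 - a 0), sq_pos_of_ne_zero hy1]
  set r : ℝ := (d + b 0 - a 0) / 2 with hr
  have hrpos : 0 < r := by
    have := abs_lt.mp habs; rw [hr]; linarith
  have hrd : r < d := by
    have := abs_lt.mp habs; rw [hr]; linarith
  set u : Pt := d⁻¹ • (b - a) with hu
  have hnu : ‖u‖ = 1 := by
    rw [hu, norm_smul, Real.norm_eq_abs, abs_of_pos (by positivity : (0:ℝ) < d⁻¹),
      ← dist_eq_norm, dist_comm, ← hd]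
    field_simp
  have hba : b = a + d • u := by
    rw [hu, smul_smul, mul_inv_cancel₀ (ne_of_gt hdpos), one_smul]
    abel
  have hb0 : b 0 = a 0 + d * u 0 := by
    rw [hba]; simp [PiLp.add_apply, PiLp.smul_apply, smul_eq_mul]
  have hu1 : u 1 ≠ 0 := by
    intro h
    rw [hu] at h
    simp only [PiLp.smul_apply, PiLp.sub_apply, smul_eq_mul] at h
    rcases mul_eq_zero.mp h with h' | h'
    · exact absurd h' (by positivity)
    · exact hy1 (by linarith [sub_eq_zero.mp h'])
  have hu2 : u 0 ^ 2 + u 1 ^ 2 = 1 := by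
    have := EuclideanSpace.norm_eq u
    rw [hnu, Fin.sum_univ_two, Real.norm_eq_abs, Real.norm_eq_abs, sq_abs, sq_abs] at this
    exact Real.sqrt_eq_one.mp this.symm
  have hu0 : -1 < u 0 := by nlinarith [sq_pos_of_ne_zero hu1]
  -- hmin restated
  have hmin' : ∀ j : Fin (n + 2), j ≠ 0 → 2 * r ≤ dist a (p j) + p j 0 - a 0 := by
    intro j hj
    have := hmin j hj
    rw [hr] at this ⊢
    linarith
  -- the vertex point
  set qs : Pt := a + r • u with hqs
  have hdaqs : dist a qs = r := by
    rw [hqs, dist_line0 a u hnu, abs_of_pos hrpos]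
  clear_value a b d r u qs
  -- strictness at qs for j ∉ {0, k}
  have hstrict : ∀ j : Fin (n + 2), j ≠ 0 → j ≠ k → r + a 0 < dist (p j) qs + p j 0 := by
    intro j hj hjk
    by_contra hcon
    push_neg at hcon
    have htri : dist (p j) a ≤ dist (p j) qs + dist qs a := dist_triangle _ _ _
    rw [dist_comm qs a, hdaqs] at htri
    have hm := hmin' j hj
    -- equalities
    rw [dist_comm a (p j)] at hm
    have heq1 : dist (p j) qs = dist (p j) a - r := by
      linarith
    have heq2 : dist (p j) a + p j 0 - a 0 = 2 * r := by
      nlinarith [dist_nonneg (x := p j) (y := qs)]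
    -- betweenness
    have hW : Wbtw ℝ (p j) qs a := by
      rw [← dist_add_dist_eq_iff]
      rw [heq1, dist_comm qs a, hdaqs]
      ring
    obtain ⟨t, ht, hteq⟩ := hW
    rw [AffineMap.lineMap_apply_module] at hteq
    have ht1 : (1 - t) • (p j - a) = r • u := by
      have : (1 - t) • p j + t • a = qs := hteq
      rw [hqs] at this
      have h2 : (1 - t) • (p j - a) = ((1 - t) • p j + t • a) - a := by module
      rw [h2, this]; module
    have htne : 1 - t ≠ 0 := by
      intro h
      rw [h, zero_smul] at ht1
      have := congrArg norm ht1
      rw [norm_zero, norm_smul, hnu, Real.norm_eq_abs, mul_one, abs_of_pos hrpos] at this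
      exact absurd this.symm (ne_of_gt hrpos)
    set s : ℝ := (1 - t)⁻¹ * r with hs
    have hpj : p j = a + s • u := by
      have : p j - a = (1 - t)⁻¹ • ((1 - t) • (p j - a)) := by
        rw [smul_smul, inv_mul_cancel₀ htne, one_smul]
      rw [ht1, smul_smul] at this
      rw [hs, ← this]; abel
    have hspos : 0 < s := by
      rw [hs]
      have ht' : 0 < 1 - t := lt_of_le_of_ne (by linarith [ht.2]) (Ne.symm htne)
      positivity
    have hdj : dist (p j) a = s := by
      rw [dist_comm, hpj, dist_line0 a u hnu, abs_of_pos hspos]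
    have hpj0 : p j 0 = a 0 + s * u 0 := by
      rw [hpj]; simp [PiLp.add_apply, PiLp.smul_apply, smul_eq_mul]
    -- s (1 + u0) = d (1 + u0)
    have h2r : 2 * r = d + d * u 0 := by rw [hr, hb0]; ring
    have hfin : s * (1 + u 0) = d * (1 + u 0) := by
      rw [hdj, hpj0] at heq2
      linarith
    have hsd : s = d := by
      have h1u : (0:ℝ) < 1 + u 0 := by linarith
      exact mul_right_cancel₀ (ne_of_gt h1u) hfin
    have hpb : p j = b := by rw [hpj, hsd, hba]
    rw [hb] at hpb
    exact hjk (hp hpb)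
  -- 2r = d + d * u 0
  have h2r : 2 * r = d + d * u 0 := by rw [hr, hb0]; ring
  -- perpendicular vector
  set v : Pt := (-(u 1)) • EuclideanSpace.single 0 (1:ℝ)
      + (u 0) • EuclideanSpace.single 1 (1:ℝ) with hv
  have hv0 : v 0 = -(u 1) := by
    simp [hv, PiLp.add_apply, PiLp.smul_apply, EuclideanSpace.single_apply]
  have hv1 : v 1 = u 0 := by
    simp [hv, PiLp.add_apply, PiLp.smul_apply, EuclideanSpace.single_apply]
  clear_value v
  have hnv : ‖v‖ = 1 := by
    rw [EuclideanSpace.norm_eq, Fin.sum_univ_two, hv0, hv1, Real.norm_eq_abs,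
      Real.norm_eq_abs, sq_abs, sq_abs,
      show (-(u 1)) ^ 2 + u 0 ^ 2 = 1 by nlinarith [hu2]]
    exact Real.sqrt_one
  -- choice of epsilon
  set δ : Fin (n + 2) → ℝ := fun j =>
    if j = 0 ∨ j = k then min r (d - r) else dist (p j) qs + p j 0 - (r + a 0) with hδ
  clear_value δ
  have hδpos : ∀ j, 0 < δ j := by
    intro j
    rw [hδ]
    dsimp only
    split_ifs with h
    · exact lt_min hrpos (by linarith)
    · push_neg at h
      linarith [hstrict j h.1 h.2]
  have hδ0 : δ 0 = min r (d - r) := by rw [hδ]; simp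
  have hδj : ∀ j, j ≠ 0 → j ≠ k → δ j = dist (p j) qs + p j 0 - (r + a 0) := by
    intro j hj hjk
    rw [hδ]
    simp [hj, hjk]
  set ε : ℝ := (Finset.univ.inf' ⟨0, Finset.mem_univ 0⟩ δ) / 8 with hε
  clear_value ε
  have hεpos : 0 < ε := by
    rw [hε]
    have : 0 < Finset.univ.inf' ⟨0, Finset.mem_univ 0⟩ δ :=
      (Finset.lt_inf'_iff _).mpr (fun j _ => hδpos j)
    positivity
  have hε8 : ∀ j, 8 * ε ≤ δ j := by
    intro j
    have h0 := Finset.inf'_le δ (Finset.mem_univ j)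
    have h1 : Finset.univ.inf' ⟨0, Finset.mem_univ 0⟩ δ ≤ δ j := h0
    rw [hε]
    linarith
  have hεr : ε ≤ r := by
    have := hε8 0
    rw [hδ0] at this
    have h2 := min_le_left r (d - r)
    linarith
  have hεdr : ε ≤ d - r := by
    have := hε8 0
    rw [hδ0] at this
    have h2 := min_le_right r (d - r)
    linarith
  -- the circle curve and the bisector function
  set c : ℝ → Pt := fun θ => qs + (ε * Real.cos θ) • u + (ε * Real.sin θ) • v with hc
  set F : ℝ → ℝ := fun θ => dist a (c θ) - dist b (c θ) - (b 0 - a 0) with hF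
  clear_value c F
  have hcC : Continuous c := by
    rw [hc]
    exact (continuous_const.add
      ((continuous_const.mul Real.continuous_cos).smul continuous_const)).add
      ((continuous_const.mul Real.continuous_sin).smul continuous_const)
  have hFC : Continuous F := by
    rw [hF]
    exact ((continuous_const.dist hcC).sub (continuous_const.dist hcC)).sub continuous_const
  have hdb' : ∀ s : ℝ, dist b (a + s • u) = |d - s| := by
    intro s
    rw [hba, dist_line a u hnu]
  have hc0 : c 0 = a + (r + ε) • u := by
    rw [hc]; dsimp only; rw [Real.cos_zero, Real.sin_zero, hqs]; module
  have hcπ : c Real.pi = a + (r - ε) • u := by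
    rw [hc]; dsimp only; rw [Real.cos_pi, Real.sin_pi, hqs]; module
  have hc2π : c (2 * Real.pi) = a + (r + ε) • u := by
    rw [hc]; dsimp only; rw [Real.cos_two_pi, Real.sin_two_pi, hqs]; module
  have hF0 : F 0 = 2 * ε := by
    rw [hF]; dsimp only
    rw [hc0, dist_line0 a u hnu, hdb', hb0,
      abs_of_nonneg (by linarith : (0:ℝ) ≤ r + ε),
      abs_of_nonneg (by linarith : (0:ℝ) ≤ d - (r + ε))]
    linarith
  have hFπ : F Real.pi = -(2 * ε) := by
    rw [hF]; dsimp only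
    rw [hcπ, dist_line0 a u hnu, hdb', hb0,
      abs_of_nonneg (by linarith : (0:ℝ) ≤ r - ε),
      abs_of_nonneg (by linarith : (0:ℝ) ≤ d - (r - ε))]
    linarith
  have hF2π : F (2 * Real.pi) = 2 * ε := by
    rw [hF]; dsimp only
    rw [hc2π, dist_line0 a u hnu, hdb', hb0,
      abs_of_nonneg (by linarith : (0:ℝ) ≤ r + ε),
      abs_of_nonneg (by linarith : (0:ℝ) ≤ d - (r + ε))]
    linarith
  -- two zeros of F
  have hθ1 : ∃ θ ∈ Set.Ioo (0:ℝ) Real.pi, F θ = 0 := by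
    have h := intermediate_value_Ioo' (a := (0:ℝ)) (b := Real.pi)
      Real.pi_pos.le hFC.continuousOn
    have h0 : (0:ℝ) ∈ Set.Ioo (F Real.pi) (F 0) := by
      rw [hF0, hFπ]; constructor <;> linarith
    obtain ⟨θ, hθ, hθ0⟩ := h h0
    exact ⟨θ, hθ, hθ0⟩
  have hθ2 : ∃ θ ∈ Set.Ioo Real.pi (2 * Real.pi), F θ = 0 := by
    have h := intermediate_value_Ioo (a := Real.pi) (b := 2 * Real.pi)
      (by linarith [Real.pi_pos]) hFC.continuousOn
    have h0 : (0:ℝ) ∈ Set.Ioo (F Real.pi) (F (2 * Real.pi)) := by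
      rw [hF2π, hFπ]; constructor <;> linarith
    obtain ⟨θ, hθ, hθ0⟩ := h h0
    exact ⟨θ, hθ, hθ0⟩
  obtain ⟨θ1, hθ1m, hθ1e⟩ := hθ1
  obtain ⟨θ2, hθ2m, hθ2e⟩ := hθ2
  have hsin1 : 0 < Real.sin θ1 := Real.sin_pos_of_pos_of_lt_pi hθ1m.1 hθ1m.2
  have hsin2 : Real.sin θ2 < 0 := by
    have h1 : 0 < Real.sin (θ2 - Real.pi) :=
      Real.sin_pos_of_pos_of_lt_pi (by linarith [hθ2m.1]) (by linarith [hθ2m.2])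
    rw [Real.sin_sub_pi] at h1
    linarith
  -- distance of circle points to qs
  have hdistc : ∀ θ : ℝ, dist qs (c θ) ≤ 2 * ε := by
    intro θ
    rw [hc]; dsimp only
    rw [dist_eq_norm]
    have heq : qs - (qs + (ε * Real.cos θ) • u + (ε * Real.sin θ) • v)
        = (-(ε * Real.cos θ)) • u + (-(ε * Real.sin θ)) • v := by module
    rw [heq]
    calc ‖(-(ε * Real.cos θ)) • u + (-(ε * Real.sin θ)) • v‖
        ≤ ‖(-(ε * Real.cos θ)) • u‖ + ‖(-(ε * Real.sin θ)) • v‖ := norm_add_le _ _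
      _ = |ε * Real.cos θ| + |ε * Real.sin θ| := by
          rw [norm_smul, norm_smul, hnu, hnv, mul_one, mul_one, Real.norm_eq_abs,
            Real.norm_eq_abs, abs_neg, abs_neg]
      _ ≤ ε * 1 + ε * 1 := by
          rw [abs_mul, abs_mul, abs_of_pos hεpos]
          have := Real.abs_cos_le_one θ
          have := Real.abs_sin_le_one θ
          have := abs_nonneg (Real.cos θ)
          have := abs_nonneg (Real.sin θ)
          nlinarith
      _ ≤ 2 * ε := by linarith
  -- membership criterion
  have hmem : ∀ q : Pt, dist a q + a 0 = dist b q + b 0 → dist qs q ≤ 2 * ε →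
      q ∈ Vcell p 0 ∩ Vcell p k := by
    intro q heqab hdq
    have hfj : ∀ j : Fin (n + 2), j ≠ 0 → j ≠ k →
        dist a q + a 0 ≤ dist (p j) q + p j 0 := by
      intro j hj hjk
      have h1 : dist a q ≤ dist a qs + dist qs q := dist_triangle _ _ _
      have h2 : dist (p j) qs ≤ dist (p j) q + dist q qs := dist_triangle _ _ _
      have h3 := hε8 j
      rw [hδj j hj hjk] at h3
      rw [dist_comm q qs] at h2
      rw [hdaqs] at h1
      linarith
    constructor
    · intro j hj
      rw [← ha]
      by_cases hjk : j = k
      · subst hjk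
        rw [← hb]
        exact le_of_eq heqab
      · exact hfj j hj hjk
    · intro j hjk
      rw [← hb, ← heqab]
      by_cases hj : j = 0
      · subst hj
        rw [← ha]
      · exact hfj j hj hjk
  -- the two zeros are on the bisector
  have hbis : ∀ θ : ℝ, F θ = 0 → dist a (c θ) + a 0 = dist b (c θ) + b 0 := by
    intro θ hθ
    rw [hF] at hθ
    dsimp only at hθ
    linarith
  -- distinctness via inner product with v
  have hinner : ∀ θ : ℝ, (inner ℝ (c θ - qs) v : ℝ) = ε * Real.sin θ := by
    intro θ
    rw [hc]; dsimp only
    have heq : (qs + (ε * Real.cos θ) • u + (ε * Real.sin θ) • v) - qs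
        = (ε * Real.cos θ) • u + (ε * Real.sin θ) • v := by module
    rw [heq, inner_add_left, real_inner_smul_left, real_inner_smul_left]
    have huv : (inner ℝ u v : ℝ) = 0 := by
      simp only [PiLp.inner_apply, RCLike.inner_apply, conj_trivial, Fin.sum_univ_two]
      rw [hv0, hv1]
      ring_nf
    have hvv : (inner ℝ v v : ℝ) = 1 := by
      simp only [PiLp.inner_apply, RCLike.inner_apply, conj_trivial, Fin.sum_univ_two]
      rw [hv0, hv1]
      linear_combination hu2
    rw [huv, hvv]
    ring
  refine ⟨c θ1, c θ2, ?_, hmem _ (hbis θ1 hθ1e) (hdistc θ1), hmem _ (hbis θ2 hθ2e) (hdistc θ2)⟩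
  intro hEq
  have h := congrArg (fun q : Pt => (inner ℝ (q - qs) v : ℝ)) hEq
  rw [hinner θ1, hinner θ2] at h
  have : Real.sin θ1 = Real.sin θ2 := mul_left_cancel₀ (ne_of_gt hεpos) h
  linarith


/-- if `pᵏ` minimizes `r_j = (d_{p¹pʲ} + x_{pʲ} - x_{p¹})/2` over
`j ∈ {2,…,n}` (here `p 0` plays the role of `p¹`), then `pᵏ` is a Voronoi neighbor of
`p¹`: `V(p¹) ∩ V(pᵏ)` contains at least two distinct points. -/
theorem disk_minimizer_is_voronoi_neighbor
    (n : ℕ) (p : Fin (n + 2) → Pt) (hp : Function.Injective p)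
    (k : Fin (n + 2)) (hk : k ≠ 0)
    (hmin : ∀ j : Fin (n + 2), j ≠ 0 →
      (dist (p 0) (p k) + p k 0 - p 0 0) / 2 ≤ (dist (p 0) (p j) + p j 0 - p 0 0) / 2) :
    ∃ q1 q2 : Pt, q1 ≠ q2 ∧
      q1 ∈ Vcell p 0 ∩ Vcell p k ∧ q2 ∈ Vcell p 0 ∩ Vcell p k := by
  by_cases hy : p k 1 = p 0 1
  · exact horiz_case n p k hk hy
  · exact nonhoriz_case n p hp k hk hmin hy
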